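/- Fix j in [m]. Suppose that, conditional on (Z_1, …, Z_{n₁}) and {Ẑ_{n+ℓ}}_{ℓ≠j}, the vector (Z_{n₁+1}, …, Z_n, Z_{n+j}) is exchangeable, and let V be a permutation-equivariant score-generating functional. Define the oracle scores (V̄^{(j)}_{n₁+1}, …, V̄^{(j)}_n, V̄^{(j)}_{n+1}, …, V̄^{(j)}_{n+m}) = V^{(j)}(Z_{1:n₁}, Z_{n₁+1:n}, Ẑ_{n+1:n+j-1}, Z_{n+j}, Ẑ_{n+j+1:n+m}), in which the true labeled point Z_{n+j} is used in the j-th test slot. Then, conditional on (Z_1, …, Z_{n₁}), {Ẑ_{n+ℓ}}_{ℓ≠j}, and the unordered multiset [Z_{n₁+1}, …, Z_n, Z_{n+j}], the n₂+1 scores (V̄^{(j)}_{n₁+1}, …, V̄^{(j)}_n, V̄^{(j)}_{n+j}) are exchangeable. -/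
import Mathlib


open MeasureTheory ProbabilityTheory

/-- The pruning threshold `r*(λ) = max{r ∈ {0,…,m} : #{j : p_j ≤ q·R̂_j/m and λ_j·R̂_j ≤ r} ≥ r}`. -/
noncomputable def prunedThreshold (m : ℕ) (q : ℝ) (p R lam : Fin m → ℝ) : ℕ :=
  Nat.findGreatest
    (fun r => r ≤ Set.ncard {j : Fin m | p j ≤ q * R j / m ∧ lam j * R j ≤ (r : ℝ)}) m

/-- The pruned selection set `S(λ) = {j : p_j ≤ q·R̂_j/m and λ_j·R̂_j ≤ r*(λ)}`. -/
noncomputable def prunedSet (m : ℕ) (q : ℝ) (p R lam : Fin m → ℝ) : Set (Fin m) :=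
  {j : Fin m | p j ≤ q * R j / m ∧ lam j * R j ≤ (prunedThreshold m q p R lam : ℝ)}

/-- The BH index `r*_BH = max{r ∈ {0,…,m} : #{j : p_j ≤ q·r/m} ≥ r}`. -/
noncomputable def bhThreshold (m : ℕ) (q : ℝ) (p : Fin m → ℝ) : ℕ :=
  Nat.findGreatest (fun r => r ≤ Set.ncard {j : Fin m | p j ≤ q * (r : ℝ) / m}) m

/-- The BH selection set `S_BH = {j : p_j ≤ q·r*_BH/m}`. -/
noncomputable def bhSet (m : ℕ) (q : ℝ) (p : Fin m → ℝ) : Set (Fin m) :=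
  {j : Fin m | p j ≤ q * (bhThreshold m q p : ℝ) / m}

namespace OptCS

/-- A score-generating functional: maps preparatory, calibration, and test inputs to an
m × (n₂ + m) matrix of scores; `V prep cal test j` is the j-th row, giving scores for the n₂
calibration points (`Sum.inl`) and the m test points (`Sum.inr`). -/
abbrev SGF (𝓧 𝓨 : Type*) (n₁ n₂ m : ℕ) :=
  (Fin n₁ → 𝓧 × 𝓨) → (Fin n₂ → 𝓧 × 𝓨) → (Fin m → 𝓧 × 𝓨) → Fin m → Fin n₂ ⊕ Fin m → ℝ

/-- An auxiliary selection function, producing the m auxiliary selection sizes. -/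
abbrev ASF (𝓧 𝓨 : Type*) (n₁ n₂ m : ℕ) :=
  (Fin n₁ → 𝓧 × 𝓨) → (Fin n₂ → 𝓧 × 𝓨) → (Fin m → 𝓧 × 𝓨) → Fin m → ℝ

variable {𝓧 𝓨 : Type*}

/-- The combined vector of the n₂ calibration inputs together with a value `zj` in the j-th
test slot, indexed by `Option (Fin n₂)` (`none` is the j-th test slot). -/
def combine {n₂ : ℕ} (cal : Fin n₂ → 𝓧 × 𝓨) (zj : 𝓧 × 𝓨) : Option (Fin n₂) → 𝓧 × 𝓨 :=
  fun o => o.elim zj cal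

/-- The output coordinates corresponding to the index set {calibration points, j-th test point}. -/
def coordIdx {n₂ m : ℕ} (j : Fin m) : Option (Fin n₂) → Fin n₂ ⊕ Fin m :=
  fun o => o.elim (Sum.inr j) Sum.inl

/-- Monotonicity for the j-th null: with thresholds c = cfun x, whenever y ≤ cfun x, replacing
the j-th test input (x, cfun x) by (x, y) does not increase the (n₂+j)-th coordinate of the j-th
row; and for ℓ ≠ j, replacing the ℓ-th test input (x, cfun x) by (x, y) (with y ≤ cfun x) leaves
the ℓ-th test coordinate of the j-th row unchanged. -/
def MonotoneNull [Preorder 𝓨] {n₁ n₂ m : ℕ} (cfun : 𝓧 → 𝓨) (V : SGF 𝓧 𝓨 n₁ n₂ m)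
    (j : Fin m) : Prop :=
  (∀ (prep : Fin n₁ → 𝓧 × 𝓨) (cal : Fin n₂ → 𝓧 × 𝓨) (test : Fin m → 𝓧 × 𝓨) (x : 𝓧) (y : 𝓨),
      y ≤ cfun x →
      V prep cal (Function.update test j (x, y)) j (Sum.inr j)
        ≤ V prep cal (Function.update test j (x, cfun x)) j (Sum.inr j)) ∧
  (∀ (prep : Fin n₁ → 𝓧 × 𝓨) (cal : Fin n₂ → 𝓧 × 𝓨) (test : Fin m → 𝓧 × 𝓨) (l : Fin m),
      l ≠ j → ∀ (x : 𝓧) (y : 𝓨), y ≤ cfun x →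
      V prep cal (Function.update test l (x, y)) j (Sum.inr l)
        = V prep cal (Function.update test l (x, cfun x)) j (Sum.inr l))

/-- Permutation equivariance: for every j, jointly permuting the n₂ calibration inputs and the
j-th test input permutes the corresponding coordinates of the j-th row accordingly. -/
def PermEquivariant {n₁ n₂ m : ℕ} (V : SGF 𝓧 𝓨 n₁ n₂ m) : Prop :=
  ∀ (j : Fin m) (prep : Fin n₁ → 𝓧 × 𝓨) (cal : Fin n₂ → 𝓧 × 𝓨) (test : Fin m → 𝓧 × 𝓨)
    (π : Equiv.Perm (Option (Fin n₂))) (i : Option (Fin n₂)),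
    V prep (fun i' => combine cal (test j) (π (some i')))
        (Function.update test j (combine cal (test j) (π none))) j (coordIdx j i)
      = V prep cal test j (coordIdx j (π i))

/-- Permutation invariance under the j-th null for an auxiliary selection function. -/
def PermInvariantNull [Preorder 𝓨] {n₁ n₂ m : ℕ} (cfun : 𝓧 → 𝓨) (R : ASF 𝓧 𝓨 n₁ n₂ m)
    (j : Fin m) : Prop :=
  ∃ R₀ : ASF 𝓧 𝓨 n₁ n₂ m,
    (∀ (prep : Fin n₁ → 𝓧 × 𝓨) (cal : Fin n₂ → 𝓧 × 𝓨) (test : Fin m → 𝓧 × 𝓨) (x : 𝓧) (y : 𝓨),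
        y ≤ cfun x →
        R₀ prep cal (Function.update test j (x, y)) j
          ≤ R prep cal (Function.update test j (x, cfun x)) j) ∧
    (∀ (prep : Fin n₁ → 𝓧 × 𝓨) (cal : Fin n₂ → 𝓧 × 𝓨) (test : Fin m → 𝓧 × 𝓨)
        (π : Equiv.Perm (Option (Fin n₂))),
        R₀ prep (fun i' => combine cal (test j) (π (some i')))
            (Function.update test j (combine cal (test j) (π none))) j
          = R₀ prep cal test j)

/-- The OptCS conformal p-values `p_j = (1 + #{i : V_i^{(j)} ≤ V̂_{n+j}^{(j)}})/(n₂+1)`. -/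
noncomputable def pvals {n₁ n₂ m : ℕ} (V : SGF 𝓧 𝓨 n₁ n₂ m)
    (prep : Fin n₁ → 𝓧 × 𝓨) (cal : Fin n₂ → 𝓧 × 𝓨) (test : Fin m → 𝓧 × 𝓨) : Fin m → ℝ :=
  fun j =>
    (1 + (Set.ncard {i : Fin n₂ |
        V prep cal test j (Sum.inl i) ≤ V prep cal test j (Sum.inr j)} : ℝ)) / (n₂ + 1)

/-- Fix j.  If, conditionally on the preparatory data and the other
(partially observed) test points, the calibration points together with the j-th test point are
exchangeable, and the score-generating functional V is permutation equivariant, then the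
oracle scores (V̄_{n₁+1}, …, V̄_n, V̄_{n+j}) — computed with the true point Z_{n+j} in the j-th
test slot — are exchangeable conditionally on the preparatory data, the other test points, and
the unordered multiset [Z_{n₁+1}, …, Z_n, Z_{n+j}] (encoded by its empirical measure). -/
theorem oracle_scores_conditionally_exchangeable
    {Ω : Type*} [MeasurableSpace Ω] (μ : Measure Ω) [IsProbabilityMeasure μ]
    {𝓧 𝓨 : Type*} [MeasurableSpace 𝓧] [MeasurableSpace 𝓨]
    (n₁ n₂ m : ℕ) (cfun : 𝓧 → 𝓨) (hcfun : Measurable cfun)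
    (V : SGF 𝓧 𝓨 n₁ n₂ m) (j : Fin m)
    (Zprep : Fin n₁ → Ω → 𝓧 × 𝓨) (Zcal : Fin n₂ → Ω → 𝓧 × 𝓨)
    (Xt : Fin m → Ω → 𝓧) (Yt : Fin m → Ω → 𝓨)
    (hVmeas : ∀ (j' : Fin m) (co : Fin n₂ ⊕ Fin m),
      Measurable (fun a : (Fin n₁ → 𝓧 × 𝓨) × (Fin n₂ → 𝓧 × 𝓨) × (Fin m → 𝓧 × 𝓨) =>
        V a.1 a.2.1 a.2.2 j' co))
    (hZprep : ∀ i, Measurable (Zprep i)) (hZcal : ∀ i, Measurable (Zcal i))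
    (hXt : ∀ l, Measurable (Xt l)) (hYt : ∀ l, Measurable (Yt l))
    -- hypothesis: conditional exchangeability of (Z_{n₁+1}, …, Z_n, Z_{n+j}) given the
    -- preparatory data and the other test points
    (hexch : ∀ π : Equiv.Perm (Option (Fin n₂)),
      Measure.map (fun ω =>
          ((fun i => Zprep i ω),
            (fun l : {l : Fin m // l ≠ j} => (Xt l.1 ω, cfun (Xt l.1 ω))),
            fun o : Option (Fin n₂) =>
              combine (fun i => Zcal i ω) (Xt j ω, Yt j ω) (π o))) μ
        = Measure.map (fun ω =>
          ((fun i => Zprep i ω),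
            (fun l : {l : Fin m // l ≠ j} => (Xt l.1 ω, cfun (Xt l.1 ω))),
            fun o : Option (Fin n₂) =>
              combine (fun i => Zcal i ω) (Xt j ω, Yt j ω) o)) μ)
    -- hypothesis: permutation equivariance of the score-generating functional
    (hequiv : PermEquivariant V) :
    -- conclusion: conditional exchangeability of the oracle scores, given the preparatory
    -- data, the other test points, and the unordered multiset of the n₂ + 1 full observations
    -- (encoded by its empirical measure)
    ∀ π : Equiv.Perm (Option (Fin n₂)),
      Measure.map (fun ω =>
          ((fun i => Zprep i ω),
            (fun l : {l : Fin m // l ≠ j} => (Xt l.1 ω, cfun (Xt l.1 ω))),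
            (∑ o : Option (Fin n₂),
              Measure.dirac (combine (fun i => Zcal i ω) (Xt j ω, Yt j ω) o)),
            fun o : Option (Fin n₂) =>
              V (fun i => Zprep i ω) (fun i => Zcal i ω)
                (Function.update (fun l => (Xt l ω, cfun (Xt l ω))) j (Xt j ω, Yt j ω)) j
                (coordIdx j (π o)))) μ
        = Measure.map (fun ω =>
          ((fun i => Zprep i ω),
            (fun l : {l : Fin m // l ≠ j} => (Xt l.1 ω, cfun (Xt l.1 ω))),
            (∑ o : Option (Fin n₂),
              Measure.dirac (combine (fun i => Zcal i ω) (Xt j ω, Yt j ω) o)),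
            fun o : Option (Fin n₂) =>
              V (fun i => Zprep i ω) (fun i => Zcal i ω)
                (Function.update (fun l => (Xt l ω, cfun (Xt l ω))) j (Xt j ω, Yt j ω)) j
                (coordIdx j o))) μ := by
  classical
  intro π
  -- The post-processing map F
  set F : (Fin n₁ → 𝓧 × 𝓨) × ({l : Fin m // l ≠ j} → 𝓧 × 𝓨) × (Option (Fin n₂) → 𝓧 × 𝓨) →
      (Fin n₁ → 𝓧 × 𝓨) × ({l : Fin m // l ≠ j} → 𝓧 × 𝓨) × Measure (𝓧 × 𝓨) ×
        (Option (Fin n₂) → ℝ) :=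
    fun a => (a.1, a.2.1,
      ∑ o : Option (Fin n₂), Measure.dirac (a.2.2 o),
      fun o => V a.1 (fun i => a.2.2 (some i))
        (fun l => if h : l = j then a.2.2 none else a.2.1 ⟨l, h⟩) j (coordIdx j o)) with hFdef
  have hdir : Measurable (fun f : Option (Fin n₂) → 𝓧 × 𝓨 =>
      ∑ o : Option (Fin n₂), Measure.dirac (f o)) := by
    apply Measure.measurable_of_measurable_coe
    intro s hs
    simp only [Measure.finset_sum_apply, Measure.dirac_apply' _ hs]
    exact Finset.measurable_sum _ fun o _ =>
      (measurable_const.indicator hs).comp (measurable_pi_apply o)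
  have hscore : Measurable (fun a : (Fin n₁ → 𝓧 × 𝓨) × ({l : Fin m // l ≠ j} → 𝓧 × 𝓨) ×
      (Option (Fin n₂) → 𝓧 × 𝓨) => fun o : Option (Fin n₂) =>
        V a.1 (fun i => a.2.2 (some i))
          (fun l => if h : l = j then a.2.2 none else a.2.1 ⟨l, h⟩) j (coordIdx j o)) := by
    refine measurable_pi_lambda _ fun o => ?_
    refine (hVmeas j (coordIdx j o)).comp (Measurable.prodMk measurable_fst
      (Measurable.prodMk ?_ ?_))
    · exact measurable_pi_lambda _ fun i =>
        (measurable_pi_apply (some i)).comp (measurable_snd.comp measurable_snd)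
    · refine measurable_pi_lambda _ fun l => ?_
      show Measurable fun a : (Fin n₁ → 𝓧 × 𝓨) × ({l : Fin m // l ≠ j} → 𝓧 × 𝓨) ×
          (Option (Fin n₂) → 𝓧 × 𝓨) =>
            if h' : l = j then a.2.2 none else a.2.1 ⟨l, h'⟩
      by_cases h : l = j
      · have : (fun a : (Fin n₁ → 𝓧 × 𝓨) × ({l : Fin m // l ≠ j} → 𝓧 × 𝓨) ×
            (Option (Fin n₂) → 𝓧 × 𝓨) =>
              if h' : l = j then a.2.2 none else a.2.1 ⟨l, h'⟩)
            = fun a => a.2.2 none := by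
          funext a; rw [dif_pos h]
        rw [this]
        exact (measurable_pi_apply (none : Option (Fin n₂))).comp
          (measurable_snd.comp measurable_snd)
      · have : (fun a : (Fin n₁ → 𝓧 × 𝓨) × ({l : Fin m // l ≠ j} → 𝓧 × 𝓨) ×
            (Option (Fin n₂) → 𝓧 × 𝓨) =>
              if h' : l = j then a.2.2 none else a.2.1 ⟨l, h'⟩)
            = fun a => a.2.1 ⟨l, h⟩ := by
          funext a; rw [dif_neg h]
        rw [this]
        exact (measurable_pi_apply (⟨l, h⟩ : {l : Fin m // l ≠ j})).comp
          (measurable_fst.comp measurable_snd)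
  have hF : Measurable F := by
    rw [hFdef]
    exact measurable_fst.prodMk ((measurable_fst.comp measurable_snd).prodMk
      ((hdir.comp (measurable_snd.comp measurable_snd)).prodMk hscore))
  -- The raw maps g σ
  set g : Equiv.Perm (Option (Fin n₂)) → Ω →
      (Fin n₁ → 𝓧 × 𝓨) × ({l : Fin m // l ≠ j} → 𝓧 × 𝓨) × (Option (Fin n₂) → 𝓧 × 𝓨) :=
    fun σ ω => ((fun i => Zprep i ω),
      (fun l : {l : Fin m // l ≠ j} => (Xt l.1 ω, cfun (Xt l.1 ω))),
      fun o : Option (Fin n₂) =>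
        combine (fun i => Zcal i ω) (Xt j ω, Yt j ω) (σ o)) with hgdef
  have hg : ∀ σ : Equiv.Perm (Option (Fin n₂)), Measurable (g σ) := by
    intro σ
    rw [hgdef]
    refine Measurable.prod (measurable_pi_lambda _ fun i => hZprep i)
      (Measurable.prod (measurable_pi_lambda _ fun l => (hXt l.1).prod (hcfun.comp (hXt l.1)))
        (measurable_pi_lambda _ fun o => ?_))
    cases h : σ o with
    | none => simpa [combine, h] using (hXt j).prod (hYt j)
    | some i => simpa [combine, h] using hZcal i
  -- Key pointwise identity: F ∘ g σ computes the σ-permuted oracle scores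
  have key : ∀ (σ : Equiv.Perm (Option (Fin n₂))) (ω : Ω),
      F (g σ ω) = ((fun i => Zprep i ω),
        (fun l : {l : Fin m // l ≠ j} => (Xt l.1 ω, cfun (Xt l.1 ω))),
        (∑ o : Option (Fin n₂),
          Measure.dirac (combine (fun i => Zcal i ω) (Xt j ω, Yt j ω) o)),
        fun o : Option (Fin n₂) =>
          V (fun i => Zprep i ω) (fun i => Zcal i ω)
            (Function.update (fun l => (Xt l ω, cfun (Xt l ω))) j (Xt j ω, Yt j ω)) j
            (coordIdx j (σ o))) := by
    intro σ ω
    simp only [hFdef, hgdef]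
    set cal : Fin n₂ → 𝓧 × 𝓨 := fun i => Zcal i ω with hcal
    set zj : 𝓧 × 𝓨 := (Xt j ω, Yt j ω) with hzj
    set testTrue : Fin m → 𝓧 × 𝓨 :=
      Function.update (fun l => (Xt l ω, cfun (Xt l ω))) j zj with htestTrue
    have hjT : testTrue j = zj := Function.update_self _ _ _
    refine Prod.ext rfl (Prod.ext rfl (Prod.ext ?_ ?_))
    · exact Equiv.sum_comp σ fun o => Measure.dirac (combine cal zj o)
    · funext o
      have hv := hequiv j (fun i => Zprep i ω) cal testTrue σ o
      rw [hjT] at hv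
      have htest : (fun l => if h : l = j then combine cal zj (σ none)
          else ((Xt l ω, cfun (Xt l ω)) : 𝓧 × 𝓨))
          = Function.update testTrue j (combine cal zj (σ none)) := by
        funext l
        by_cases h : l = j
        · subst h; simp
        · simp only [dif_neg h, htestTrue, Function.update_of_ne h]
      rw [htest]
      exact hv
  -- Conclude by pushing forward the exchangeability hypothesis through F
  have hmapπ : (fun ω =>
      ((fun i => Zprep i ω),
        (fun l : {l : Fin m // l ≠ j} => (Xt l.1 ω, cfun (Xt l.1 ω))),
        (∑ o : Option (Fin n₂),
          Measure.dirac (combine (fun i => Zcal i ω) (Xt j ω, Yt j ω) o)),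
        fun o : Option (Fin n₂) =>
          V (fun i => Zprep i ω) (fun i => Zcal i ω)
            (Function.update (fun l => (Xt l ω, cfun (Xt l ω))) j (Xt j ω, Yt j ω)) j
            (coordIdx j (π o)))) = F ∘ g π := by
    funext ω; exact (key π ω).symm
  have hmapid : (fun ω =>
      ((fun i => Zprep i ω),
        (fun l : {l : Fin m // l ≠ j} => (Xt l.1 ω, cfun (Xt l.1 ω))),
        (∑ o : Option (Fin n₂),
          Measure.dirac (combine (fun i => Zcal i ω) (Xt j ω, Yt j ω) o)),
        fun o : Option (Fin n₂) =>
          V (fun i => Zprep i ω) (fun i => Zcal i ω)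
            (Function.update (fun l => (Xt l ω, cfun (Xt l ω))) j (Xt j ω, Yt j ω)) j
            (coordIdx j o))) = F ∘ g (Equiv.refl _) := by
    funext ω; exact (key (Equiv.refl _) ω).symm
  rw [hmapπ, hmapid, ← Measure.map_map hF (hg π), ← Measure.map_map hF (hg (Equiv.refl _))]
  congr 1
  exact hexch π

end OptCS
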